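/- arXiv:0802.3284 — 2 statements merged into one kernel-verified Lean document; each statement's English description precedes it below -/
import Mathlib

section
/- If v is a vertex of degree 1 in an α-critical graph G, then v together with its unique neighbor forms a connected component of G. -/
open Finset
open scoped Classical

/-- The Fibonacci index: the number of independent (stable) sets of `G`,
including the empty set. -/
noncomputable def fibIndex {V : Type*} [Fintype V] (G : SimpleGraph V) : ℕ :=
  (Finset.univ.filter fun s : Finset V => ∀ a ∈ s, ∀ b ∈ s, ¬ G.Adj a b).card

/-- The independence (stability) number of `G`. -/
noncomputable def indepNum {V : Type*} [Fintype V] (G : SimpleGraph V) : ℕ :=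
  (Finset.univ.filter fun s : Finset V => ∀ a ∈ s, ∀ b ∈ s, ¬ G.Adj a b).sup Finset.card

/-- A graph is `α`-critical if deleting any edge strictly increases the
independence number (a graph with no edges is `α`-critical by convention). -/
noncomputable def AlphaCritical {V : Type*} [Fintype V] (G : SimpleGraph V) : Prop :=
  ∀ e ∈ G.edgeSet, indepNum G < indepNum (G.deleteEdges {e})

lemma indep_le_indepNum {V : Type*} [Fintype V] (G : SimpleGraph V) (s : Finset V)
    (hs : ∀ a ∈ s, ∀ b ∈ s, ¬ G.Adj a b) : s.card ≤ indepNum G :=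
  Finset.le_sup (Finset.mem_filter.mpr ⟨Finset.mem_univ _, hs⟩)

lemma exists_indep_card {V : Type*} [Fintype V] (G : SimpleGraph V) :
    ∃ s : Finset V, (∀ a ∈ s, ∀ b ∈ s, ¬ G.Adj a b) ∧ s.card = indepNum G := by
  have hne : (Finset.univ.filter fun s : Finset V => ∀ a ∈ s, ∀ b ∈ s, ¬ G.Adj a b).Nonempty :=
    ⟨∅, by simp⟩
  obtain ⟨s, hs, hsup⟩ := Finset.exists_mem_eq_sup _ hne Finset.card
  exact ⟨s, by simpa using hs, hsup.symm⟩

theorem stmt_12 {V : Type*} [Fintype V] {G : SimpleGraph V} [DecidableRel G.Adj]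
    (hcrit : AlphaCritical G) (v w : V) (hdeg : G.degree v = 1) (hw : G.Adj v w) :
    ∀ u, G.Reachable v u ↔ u = v ∨ u = w := by
  -- neighbors of v are exactly {w}
  have hvw : v ≠ w := G.ne_of_adj hw
  have hvN : ∀ y, G.Adj v y → y = w := by
    intro y hy
    obtain ⟨a, ha⟩ := Finset.card_eq_one.mp hdeg
    have hwmem : w ∈ G.neighborFinset v := by simpa using hw
    have hymem : y ∈ G.neighborFinset v := by simpa using hy
    rw [ha, Finset.mem_singleton] at hwmem hymem
    rw [hymem, hwmem]
  -- neighbors of w are exactly {v}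
  have hwN : ∀ y, G.Adj w y → y = v := by
    intro u hwu
    by_contra huv
    have he : s(w, u) ∈ G.edgeSet := hwu
    have hlt := hcrit _ he
    set G' := G.deleteEdges {s(w, u)} with hG'
    obtain ⟨S, hSind, hScard⟩ := exists_indep_card G'
    have hadj' : ∀ a b, G'.Adj a b ↔ G.Adj a b ∧ s(a, b) ≠ s(w, u) := by
      intro a b
      simp [hG', SimpleGraph.deleteEdges_adj]
    -- both w and u must be in S
    have hwuS : w ∈ S ∧ u ∈ S := by
      by_contra hcon
      have hSG : ∀ a ∈ S, ∀ b ∈ S, ¬ G.Adj a b := by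
        intro a ha b hb hab
        refine hSind a ha b hb ((hadj' a b).mpr ⟨hab, ?_⟩)
        intro heq
        rcases Sym2.eq_iff.mp heq with ⟨h1, h2⟩ | ⟨h1, h2⟩
        · exact hcon ⟨h1 ▸ ha, h2 ▸ hb⟩
        · exact hcon ⟨h2 ▸ hb, h1 ▸ ha⟩
      have := indep_le_indepNum G S hSG
      omega
    obtain ⟨hwS, huS⟩ := hwuS
    -- v ∉ S since v adjacent to w in G'
    have hvu : v ≠ u := fun h => huv (h ▸ rfl) |>.elim
    have hvwadj' : G'.Adj v w := by
      refine (hadj' v w).mpr ⟨hw, ?_⟩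
      intro heq
      rcases Sym2.eq_iff.mp heq with ⟨h1, h2⟩ | ⟨h1, h2⟩
      · exact hvw h1
      · exact hvu h1
    have hvS : v ∉ S := fun hvS => hSind v hvS w hwS hvwadj'
    -- T = insert v (S.erase w) is independent in G
    set T := insert v (S.erase w) with hT
    have hTind : ∀ a ∈ T, ∀ b ∈ T, ¬ G.Adj a b := by
      intro a ha b hb hab
      rw [hT, Finset.mem_insert] at ha hb
      rcases ha with rfl | ha
      · rcases hb with rfl | hb
        · exact G.irrefl hab
        · exact (Finset.ne_of_mem_erase hb) (hvN b hab)
      · rcases hb with rfl | hb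
        · exact (Finset.ne_of_mem_erase ha) (hvN a hab.symm)
        · have haw : a ≠ w := Finset.ne_of_mem_erase ha
          have hbw : b ≠ w := Finset.ne_of_mem_erase hb
          refine hSind a (Finset.mem_of_mem_erase ha) b (Finset.mem_of_mem_erase hb)
            ((hadj' a b).mpr ⟨hab, ?_⟩)
          intro heq
          rcases Sym2.eq_iff.mp heq with ⟨h1, h2⟩ | ⟨h1, h2⟩
          · exact haw h1
          · exact hbw h2
    have hTcard : T.card = S.card := by
      rw [hT, Finset.card_insert_of_notMem (fun h => hvS (Finset.mem_of_mem_erase h)),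
        Finset.card_erase_of_mem hwS]
      have : 1 ≤ S.card := Finset.card_pos.mpr ⟨w, hwS⟩
      omega
    have := indep_le_indepNum G T hTind
    omega
  -- now reachability
  intro u
  constructor
  · intro ⟨p⟩
    have key : ∀ (x y : V) (_ : G.Walk x y), x = v ∨ x = w → y = v ∨ y = w := by
      intro x y p
      induction p with
      | nil => exact id
      | cons h p ih =>
        intro hx
        apply ih
        rcases hx with rfl | rfl
        · right; exact hvN _ h
        · left; exact hwN _ h
    exact key v u p (Or.inl rfl)
  · rintro (rfl | rfl)
    · exact SimpleGraph.Reachable.refl _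
    · exact hw.reachable
end

section
/- Every vertex of degree at least 2 in an α-critical graph is contained in a cycle. -/
open Finset
open scoped Classical

section aux

variable {V : Type*} {G : SimpleGraph V}

/-- From a walk avoiding `v` between two distinct neighbors of `v`, build a cycle at `v`. -/
lemma cycle_of_walk_avoiding {v a b : V} (hva : G.Adj v a) (hvb : G.Adj v b)
    (hab : a ≠ b) (p : G.Walk a b) (hv : v ∉ p.support) :
    ∃ c : G.Walk v v, c.IsCycle := by
  classical
  set q : G.Walk a b := (p.toPath : G.Walk a b)
  have hqv : v ∉ q.support := fun h => hv (SimpleGraph.Walk.support_toPath_subset p h)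
  have hqp : q.IsPath := p.toPath.2
  refine ⟨SimpleGraph.Walk.cons hva (q.concat hvb.symm), ?_⟩
  rw [SimpleGraph.Walk.cons_isCycle_iff]
  constructor
  · rw [SimpleGraph.Walk.isPath_def, SimpleGraph.Walk.support_concat]
    rw [List.nodup_append]
    refine ⟨hqp.support_nodup, List.nodup_singleton v, ?_⟩
    intro x hx y hy hxy
    simp only [List.mem_singleton] at hy
    subst hy
    subst hxy
    exact hqv hx
  · rw [SimpleGraph.Walk.edges_concat]
    intro h
    simp only [List.concat_eq_append, List.mem_append, List.mem_singleton] at h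
    rcases h with h | h
    · exact hqv (SimpleGraph.Walk.fst_mem_support_of_mem_edges q h)
    · rw [Sym2.eq_iff] at h
      rcases h with ⟨h1, h2⟩ | ⟨h1, h2⟩
      · exact hvb.ne h1
      · exact hab h2

/-- An independent set of `G` has size at most `indepNum G`. -/
lemma card_le_indepNum [Fintype V] {s : Finset V}
    (hs : ∀ a ∈ s, ∀ b ∈ s, ¬ G.Adj a b) : s.card ≤ indepNum G :=
  Finset.le_sup (Finset.mem_filter.mpr ⟨Finset.mem_univ _, hs⟩)

/-- There is a large "almost independent" set containing both ends of any edge,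
in an α-critical graph. -/
lemma exists_big_set [Fintype V] (hcrit : AlphaCritical G) {v a : V} (hva : G.Adj v a) :
    ∃ s : Finset V, indepNum G < s.card ∧ v ∈ s ∧ a ∈ s ∧
      ∀ x ∈ s, ∀ y ∈ s, G.Adj x y → s(x, y) = s(v, a) := by
  classical
  have h := hcrit s(v, a) ((SimpleGraph.mem_edgeSet G).mpr hva)
  unfold indepNum at h
  rw [Finset.lt_sup_iff] at h
  obtain ⟨s, hs, hcard⟩ := h
  simp only [Finset.mem_filter] at hs
  have hind : ∀ x ∈ s, ∀ y ∈ s, G.Adj x y → s(x, y) = s(v, a) := by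
    intro x hx y hy hadj
    have h2 := hs.2 x hx y hy
    rw [SimpleGraph.deleteEdges_adj] at h2
    push_neg at h2
    exact Set.mem_singleton_iff.mp (h2 hadj)
  refine ⟨s, hcard, ?_, ?_, hind⟩ <;> by_contra hmem
  · have : ∀ x ∈ s, ∀ y ∈ s, ¬ G.Adj x y := by
      intro x hx y hy hadj
      have := hind x hx y hy hadj
      rw [Sym2.eq_iff] at this
      rcases this with ⟨h1, _⟩ | ⟨_, h2⟩
      · exact hmem (h1 ▸ hx)
      · exact hmem (h2 ▸ hy)
    exact absurd (card_le_indepNum this) (not_le.mpr hcard)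
  · have : ∀ x ∈ s, ∀ y ∈ s, ¬ G.Adj x y := by
      intro x hx y hy hadj
      have := hind x hx y hy hadj
      rw [Sym2.eq_iff] at this
      rcases this with ⟨_, h2⟩ | ⟨h1, _⟩
      · exact hmem (h2 ▸ hy)
      · exact hmem (h1 ▸ hx)
    exact absurd (card_le_indepNum this) (not_le.mpr hcard)

end aux

theorem stmt_13 {V : Type*} [Fintype V] {G : SimpleGraph V} [DecidableRel G.Adj]
    (hcrit : AlphaCritical G) (v : V) (hdeg : 2 ≤ G.degree v) :
    ∃ c : G.Walk v v, c.IsCycle := by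
  classical
  by_contra hnc
  push_neg at hnc
  -- two distinct neighbors
  obtain ⟨a, ha, b, hb, hab⟩ := Finset.one_lt_card.mp (lt_of_lt_of_le one_lt_two hdeg)
  rw [SimpleGraph.mem_neighborFinset] at ha hb
  -- the graph with `v` removed
  set H : SimpleGraph V :=
    { Adj := fun x y => G.Adj x y ∧ x ≠ v ∧ y ≠ v
      symm := ⟨fun x y h => ⟨h.1.symm, h.2.2, h.2.1⟩⟩
      loopless := ⟨fun x h => G.loopless.irrefl x h.1⟩ } with hH
  have hHadj : ∀ {x y : V}, H.Adj x y ↔ (G.Adj x y ∧ x ≠ v ∧ y ≠ v) := fun {x y} => Iff.rfl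
  -- walks in H avoid v (given start ≠ v)
  have hnotv : ∀ {x y : V} (w : H.Walk x y), x ≠ v → y ≠ v := by
    intro x y w
    induction w with
    | nil => exact fun h => h
    | cons h p ih => exact fun _ => ih (hHadj.mp h).2.2
  have toG : ∀ {x y : V} (w : H.Walk x y), x ≠ v → ∃ p : G.Walk x y, v ∉ p.support := by
    intro x y w
    induction w with
    | nil =>
      intro hx
      exact ⟨SimpleGraph.Walk.nil, by simp [Ne.symm hx]⟩
    | cons h p ih =>
      intro hx
      obtain ⟨q, hq⟩ := ih (hHadj.mp h).2.2
      refine ⟨SimpleGraph.Walk.cons (hHadj.mp h).1 q, ?_⟩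
      rw [SimpleGraph.Walk.support_cons]
      simp only [List.mem_cons]
      rintro (h' | h')
      · exact hx h'.symm
      · exact hq h'
  -- a and b are not H-reachable from each other (else cycle)
  have hnr : ¬ H.Reachable a b := by
    intro hr
    obtain ⟨w⟩ := hr
    obtain ⟨p, hp⟩ := toG w ha.ne'
    obtain ⟨c, hc⟩ := cycle_of_walk_avoiding ha hb hab p hp
    exact hnc c hc
  -- the component of a
  set A : Finset V := Finset.univ.filter (fun x => H.Reachable a x) with hA
  have haA : a ∈ A := Finset.mem_filter.mpr ⟨Finset.mem_univ _, SimpleGraph.Reachable.refl a⟩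
  have hvA : v ∉ A := by
    intro h
    obtain ⟨w⟩ := (Finset.mem_filter.mp h).2
    exact hnotv w ha.ne' rfl
  have hbA : b ∉ A := fun h => hnr (Finset.mem_filter.mp h).2
  -- edges leaving A go through v
  have hcross : ∀ {x y : V}, x ∈ A → y ∉ A → G.Adj x y → y = v := by
    intro x y hx hy hadj
    by_contra hyv
    have hxv : x ≠ v := fun h => hvA (h ▸ hx)
    have : H.Adj x y := hHadj.mpr ⟨hadj, hxv, hyv⟩
    exact hy (Finset.mem_filter.mpr ⟨Finset.mem_univ _,
      ((Finset.mem_filter.mp hx).2.trans this.reachable)⟩)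
  -- large almost-independent sets
  obtain ⟨sa, hsa_card, hvsa, hasa, hsa⟩ := exists_big_set hcrit ha
  obtain ⟨sb, hsb_card, hvsb, hbsb, hsb⟩ := exists_big_set hcrit hb
  -- two independent sets of G
  set T1 : Finset V := ((sa ∩ A) ∪ (sb \ A)) \ {v} with hT1
  set T2 : Finset V := (sb ∩ A) ∪ (sa \ A) with hT2
  have hT1ind : ∀ x ∈ T1, ∀ y ∈ T1, ¬ G.Adj x y := by
    intro x hx y hy hadj
    simp only [hT1, Finset.mem_sdiff, Finset.mem_union, Finset.mem_inter,
      Finset.mem_singleton] at hx hy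
    obtain ⟨hx, hxv⟩ := hx
    obtain ⟨hy, hyv⟩ := hy
    rcases hx with ⟨hxs, hxA⟩ | ⟨hxs, hxA⟩ <;> rcases hy with ⟨hys, hyA⟩ | ⟨hys, hyA⟩
    · have := hsa x hxs y hys hadj
      rw [Sym2.eq_iff] at this
      rcases this with ⟨h1, _⟩ | ⟨_, h2⟩
      · exact hxv h1
      · exact hyv h2
    · exact hyv (hcross hxA hyA hadj)
    · exact hxv (hcross hyA hxA hadj.symm)
    · have := hsb x hxs y hys hadj
      rw [Sym2.eq_iff] at this
      rcases this with ⟨h1, _⟩ | ⟨_, h2⟩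
      · exact hxv h1
      · exact hyv h2
  have hT2ind : ∀ x ∈ T2, ∀ y ∈ T2, ¬ G.Adj x y := by
    have key : ∀ x y : V, x ∈ sb ∩ A → y ∈ sa \ A → ¬ G.Adj x y := by
      intro x y hx hy hadj
      rw [Finset.mem_inter] at hx
      rw [Finset.mem_sdiff] at hy
      have hyeq : y = v := hcross hx.2 hy.2 hadj
      rw [hyeq] at hadj
      have := hsb x hx.1 v hvsb hadj
      rw [Sym2.eq_iff] at this
      rcases this with ⟨h1, _⟩ | ⟨h1, _⟩
      · exact hvA (h1 ▸ hx.2)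
      · exact hbA (h1 ▸ hx.2)
    intro x hx y hy hadj
    simp only [hT2, Finset.mem_union] at hx hy
    rcases hx with hx | hx <;> rcases hy with hy | hy
    · rw [Finset.mem_inter] at hx hy
      have := hsb x hx.1 y hy.1 hadj
      rw [Sym2.eq_iff] at this
      rcases this with ⟨h1, _⟩ | ⟨_, h2⟩
      · exact hvA (h1 ▸ hx.2)
      · exact hvA (h2 ▸ hy.2)
    · exact key x y hx hy hadj
    · exact key y x hy hx hadj.symm
    · rw [Finset.mem_sdiff] at hx hy
      have := hsa x hx.1 y hy.1 hadj
      rw [Sym2.eq_iff] at this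
      rcases this with ⟨_, h2⟩ | ⟨h1, _⟩
      · exact hy.2 (h2 ▸ haA)
      · exact hx.2 (h1 ▸ haA)
  have hle1 : T1.card ≤ indepNum G := card_le_indepNum hT1ind
  have hle2 : T2.card ≤ indepNum G := card_le_indepNum hT2ind
  -- cardinality computations
  have hdisj1 : Disjoint (sa ∩ A) (sb \ A) := by
    rw [Finset.disjoint_left]
    intro x hx hx'
    exact (Finset.mem_sdiff.mp hx').2 (Finset.mem_inter.mp hx).2
  have hdisj2 : Disjoint (sb ∩ A) (sa \ A) := by
    rw [Finset.disjoint_left]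
    intro x hx hx'
    exact (Finset.mem_sdiff.mp hx').2 (Finset.mem_inter.mp hx).2
  have hvmem : {v} ⊆ (sa ∩ A) ∪ (sb \ A) :=
    Finset.singleton_subset_iff.mpr
      (Finset.mem_union.mpr (Or.inr (Finset.mem_sdiff.mpr ⟨hvsb, hvA⟩)))
  have hc1 : T1.card = (sa ∩ A).card + (sb \ A).card - 1 := by
    rw [hT1, Finset.card_sdiff_of_subset hvmem, Finset.card_union_of_disjoint hdisj1,
      Finset.card_singleton]
  have hc2 : T2.card = (sb ∩ A).card + (sa \ A).card := by
    rw [hT2, Finset.card_union_of_disjoint hdisj2]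
  have hsaeq : (sa ∩ A).card + (sa \ A).card = sa.card := Finset.card_inter_add_card_sdiff sa A
  have hsbeq : (sb ∩ A).card + (sb \ A).card = sb.card := Finset.card_inter_add_card_sdiff sb A
  have hvunion : 1 ≤ (sa ∩ A).card + (sb \ A).card := by
    have : 0 < (sb \ A).card := Finset.card_pos.mpr ⟨v, Finset.mem_sdiff.mpr ⟨hvsb, hvA⟩⟩
    omega
  omega
end
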